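/- For every finitely supported c : ℤ[i] → ℂ and every integer q ≥ 1, define S''_q = Σ_{z₁ = u₁+iv₁, z₂ = u₂+iv₂ ∈ ℤ[i], u₁v₂ ≡ u₂v₁ (mod q), gcd(u₁v₁, q) = gcd(u₂v₂, q) = 1} c(z₁)·conj(c(z₂)). Then S''_q = (1/q)·Σ_{a mod q} |Σ_{z = u+iv, gcd(uv,q)=1} c(z)·e(a·u·v*/q)|² = (1/q)·Σ_{a mod q} |Σ_{z = u+iv, gcd(uv,q)=1} c(z)·e(a·u*·v/q)|², where u* and v* denote the multiplicative inverses of u and v modulo q. -/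

import Mathlib

open scoped ComplexConjugate
open scoped Classical

noncomputable section

/-- `z = u+iv` is *odd primitive*: `u ≢ v (mod 2)`, `gcd(u,v) = 1`, `uv ≠ 0`. -/
def OddPrimitive (z : GaussianInt) : Prop :=
  ¬ z.re ≡ z.im [ZMOD 2] ∧ Int.gcd z.re z.im = 1 ∧ z.re * z.im ≠ 0

/-- The determinant sum `S_q = ∑_{u₁v₂ ≡ u₂v₁ (mod q)} c(z₁) conj (c(z₂))`. -/
def detSum (c : GaussianInt → ℂ) (q : ℕ) : ℂ :=
  ∑ᶠ z₁ : GaussianInt, ∑ᶠ z₂ : GaussianInt,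
    if (q : ℤ) ∣ (z₁.re * z₂.im - z₂.re * z₁.im) then c z₁ * conj (c z₂) else 0

/-- The reduced determinant sum `S'_q`, with the extra condition `gcd(v₁v₂, q) = 1`. -/
def detSum' (c : GaussianInt → ℂ) (q : ℕ) : ℂ :=
  ∑ᶠ z₁ : GaussianInt, ∑ᶠ z₂ : GaussianInt,
    if (q : ℤ) ∣ (z₁.re * z₂.im - z₂.re * z₁.im) ∧ Int.gcd (z₁.im * z₂.im) q = 1
    then c z₁ * conj (c z₂) else 0

/-- `S(Q,X) = ∑_{1 ≤ q ≤ Q} S_q` (the dependence on `X` is through the support of `c`). -/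
def SQX (c : GaussianInt → ℂ) (Q : ℝ) : ℂ :=
  ∑ q ∈ Finset.Icc 1 ⌊Q⌋₊, detSum c q

/-- `c` is supported on odd primitive Gaussian integers `z` with `1 < |z|² ≤ X`. -/
def SuppOK (c : GaussianInt → ℂ) (X : ℝ) : Prop :=
  ∀ z : GaussianInt, c z ≠ 0 →
    OddPrimitive z ∧ 1 < (Zsqrtd.norm z : ℝ) ∧ (Zsqrtd.norm z : ℝ) ≤ X

/-- The Siegel–Walfisz condition with exponent `B` and constant `K`. -/
def SWCond (c : GaussianInt → ℂ) (X B K : ℝ) : Prop :=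
  ∀ (k ℓ : ℕ), 1 ≤ ℓ → ∀ (α : GaussianInt) (t : ℝ),
    norm (∑ᶠ z : GaussianInt,
        if z ≠ 0 ∧ (ℓ : GaussianInt) ∣ (z - α) then
          c z * (conj (GaussianInt.toComplex z) / GaussianInt.toComplex z) ^ k *
            (norm (GaussianInt.toComplex z) : ℂ) ^ ((t : ℂ) * Complex.I)
        else 0)
      ≤ K * (ℓ : ℝ) ^ 2 * ((k : ℝ) ^ 2 + 1) * (t ^ 2 + 1) * X * Real.log X ^ (-B)

/-- The additive character `x ↦ e(x/q)` on `ℤ/qℤ`. -/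
def eChar (q : ℕ) (x : ZMod q) : ℂ :=
  Complex.exp (2 * Real.pi * Complex.I * ((x.val : ℂ) / (q : ℂ)))

/-- The doubly-restricted determinant sum `S''_q`, with `gcd(u₁v₁,q) = gcd(u₂v₂,q) = 1`. -/
def detSum'' (c : GaussianInt → ℂ) (q : ℕ) : ℂ :=
  ∑ᶠ z₁ : GaussianInt, ∑ᶠ z₂ : GaussianInt,
    if (q : ℤ) ∣ (z₁.re * z₂.im - z₂.re * z₁.im) ∧
        Int.gcd (z₁.re * z₁.im) q = 1 ∧ Int.gcd (z₂.re * z₂.im) q = 1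
    then c z₁ * conj (c z₂) else 0

/-! ### Auxiliary lemmas on the additive character -/

lemma pow_mod_eq (w : ℂ) (q n : ℕ) (hw : w ^ q = 1) : w ^ (n % q) = w ^ n := by
  conv_rhs => rw [← Nat.div_add_mod n q, pow_add, pow_mul, hw, one_pow, one_mul]

lemma eChar_eq_pow (q : ℕ) (y : ZMod q) :
    eChar q y = Complex.exp (2 * Real.pi * Complex.I / q) ^ y.val := by
  rw [eChar, show 2 * (Real.pi:ℂ) * Complex.I * ((y.val : ℂ) / (q : ℂ))
      = (y.val : ℕ) * (2 * Real.pi * Complex.I / q) by ring,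
    Complex.exp_nat_mul]

lemma zeta_pow (q : ℕ) (hq : q ≠ 0) :
    Complex.exp (2 * Real.pi * Complex.I / q) ^ q = 1 := by
  have hq' : (q : ℂ) ≠ 0 := Nat.cast_ne_zero.mpr hq
  rw [← Complex.exp_nat_mul,
    show (q : ℂ) * (2 * Real.pi * Complex.I / q) = 2 * Real.pi * Complex.I by
      field_simp,
    Complex.exp_two_pi_mul_I]

lemma eChar_zero (q : ℕ) : eChar q 0 = 1 := by
  rw [eChar_eq_pow, ZMod.val_zero, pow_zero]

lemma eChar_add (q : ℕ) (hq : q ≠ 0) (y z : ZMod q) :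
    eChar q (y + z) = eChar q y * eChar q z := by
  haveI : NeZero q := ⟨hq⟩
  rw [eChar_eq_pow, eChar_eq_pow, eChar_eq_pow, ZMod.val_add,
    pow_mod_eq _ q _ (zeta_pow q hq), pow_add]

lemma eChar_ne_zero (q : ℕ) (y : ZMod q) : eChar q y ≠ 0 := Complex.exp_ne_zero _

lemma eChar_abs (q : ℕ) (y : ZMod q) : norm (eChar q y) = 1 := by
  rw [eChar, show 2 * (Real.pi:ℂ) * Complex.I * ((y.val : ℂ) / (q : ℂ))
      = ((2 * Real.pi * y.val / q : ℝ) : ℂ) * Complex.I by push_cast; ring,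
    Complex.norm_exp_ofReal_mul_I]

lemma eChar_conj (q : ℕ) (hq : q ≠ 0) (y : ZMod q) :
    conj (eChar q y) = eChar q (-y) := by
  have h1 : eChar q (-y) * eChar q y = 1 := by
    rw [← eChar_add q hq, neg_add_cancel, eChar_zero]
  have h2 : conj (eChar q y) * eChar q y = 1 := by
    rw [mul_comm, Complex.mul_conj, ← Complex.sq_norm, eChar_abs]
    norm_num
  exact mul_right_cancel₀ (eChar_ne_zero q y) (h2.trans h1.symm)

lemma sum_eChar (q : ℕ) (hq : q ≠ 0) (x : ZMod q) :
    ∑ a ∈ Finset.range q, eChar q ((a : ZMod q) * x) = if x = 0 then (q : ℂ) else 0 := by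
  haveI : NeZero q := ⟨hq⟩
  set ζ := Complex.exp (2 * Real.pi * Complex.I / q) with hζdef
  have hζ : ζ ^ q = 1 := zeta_pow q hq
  have hw : (ζ ^ x.val) ^ q = 1 := by
    rw [← pow_mul, mul_comm, pow_mul, hζ, one_pow]
  have key : ∀ a : ℕ, eChar q ((a : ZMod q) * x) = (ζ ^ x.val) ^ a := by
    intro a
    rw [eChar_eq_pow, ZMod.val_mul, pow_mod_eq _ q _ hζ, mul_comm, pow_mul,
      ZMod.val_natCast, pow_mod_eq _ q _ hw]
  simp only [key]
  by_cases hx : x = 0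
  · simp [hx]
  · rw [if_neg hx]
    have hwne : ζ ^ x.val ≠ 1 := by
      intro h
      rw [hζdef, ← Complex.exp_nat_mul, Complex.exp_eq_one_iff] at h
      obtain ⟨n, hn⟩ := h
      have hq' : (q : ℂ) ≠ 0 := Nat.cast_ne_zero.mpr hq
      have h2 : (2 * (Real.pi:ℂ) * Complex.I) ≠ 0 := by
        simp [Real.pi_ne_zero, Complex.I_ne_zero]
      have heq : (x.val : ℂ) = (n : ℂ) * q := by
        apply mul_right_cancel₀ (b := 2 * (Real.pi:ℂ) * Complex.I / q)
          (div_ne_zero h2 hq')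
        rw [hn]
        field_simp
      have heqz : (x.val : ℤ) = n * q := by exact_mod_cast heq
      have hdvd : q ∣ x.val := by
        have : (q : ℤ) ∣ (x.val : ℤ) := ⟨n, by linarith⟩
        exact_mod_cast this
      have h0 : x.val ≠ 0 := fun h0 => hx ((ZMod.val_eq_zero x).mp h0)
      have := Nat.le_of_dvd (Nat.pos_of_ne_zero h0) hdvd
      have := ZMod.val_lt x
      omega
    rw [geom_sum_eq hwne, hw, sub_self, zero_div]

lemma unit_cross {q : ℕ} (a₁ b₁ a₂ b₂ : ZMod q) (h₁ : b₁ * b₁⁻¹ = 1) (h₂ : b₂ * b₂⁻¹ = 1) :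
    a₁ * b₂ = a₂ * b₁ ↔ a₁ * b₁⁻¹ = a₂ * b₂⁻¹ := by
  constructor
  · intro h
    linear_combination (b₁⁻¹ * b₂⁻¹) * h - (a₁ * b₁⁻¹) * h₂ + (a₂ * b₂⁻¹) * h₁
  · intro h
    linear_combination (b₁ * b₂) * h - (a₁ * b₂) * h₁ + (a₂ * b₁) * h₂

lemma isUnit_intCast_of_coprime {q : ℕ} {u : ℤ} (h1 : IsCoprime u (q : ℤ)) :
    IsUnit ((u : ZMod q)) := by
  have h2 := h1.map (Int.castRingHom (ZMod q))
  have h3 : IsCoprime ((u : ZMod q)) (0 : ZMod q) := by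
    have hz : (((q : ℤ) : ZMod q)) = 0 := by push_cast; simp
    simpa [hz] using h2
  exact isCoprime_zero_right.mp h3

lemma isUnit_pair {q : ℕ} {u v : ℤ} (h : Int.gcd (u * v) q = 1) :
    IsUnit ((u : ZMod q)) ∧ IsUnit ((v : ZMod q)) := by
  have h1 : IsCoprime (u * v) (q : ℤ) := Int.isCoprime_iff_gcd_eq_one.mpr h
  exact ⟨isUnit_intCast_of_coprime h1.of_mul_left_left,
    isUnit_intCast_of_coprime h1.of_mul_left_right⟩

/-! ### The main identity, for an abstract argument function `x` -/

lemma main_identity (c : GaussianInt → ℂ) (hfin : (Function.support c).Finite)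
    (q : ℕ) (hq : 1 ≤ q) (x : GaussianInt → ZMod q)
    (hx : ∀ z₁ z₂ : GaussianInt, Int.gcd (z₁.re * z₁.im) q = 1 →
      Int.gcd (z₂.re * z₂.im) q = 1 →
      ((q : ℤ) ∣ (z₁.re * z₂.im - z₂.re * z₁.im) ↔ x z₁ = x z₂)) :
    detSum'' c q = (((q : ℝ)⁻¹ * ∑ a ∈ Finset.range q,
        norm (∑ᶠ z : GaussianInt,
          if Int.gcd (z.re * z.im) q = 1 then
            c z * eChar q ((a : ZMod q) * x z)
          else 0) ^ 2 : ℝ) : ℂ) := by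
  classical
  have hq0 : q ≠ 0 := by omega
  have hqc : (q : ℂ) ≠ 0 := Nat.cast_ne_zero.mpr hq0
  set K := hfin.toFinset with hKdef
  have hmemK : ∀ z, z ∈ K ↔ c z ≠ 0 := fun z => hfin.mem_toFinset
  set f : ℕ → GaussianInt → ℂ := fun a z =>
    if Int.gcd (z.re * z.im) q = 1 then c z * eChar q ((a : ZMod q) * x z) else 0 with hf
  have hfsupp : ∀ a, Function.support (f a) ⊆ ↑K := by
    intro a z hz
    simp only [Function.mem_support, hf] at hz
    have hc : c z ≠ 0 := by intro h0; apply hz; simp [h0]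
    exact Finset.mem_coe.mpr ((hmemK z).mpr hc)
  have innerEq : ∀ a : ℕ, (∑ᶠ z, f a z) = ∑ z ∈ K, f a z := fun a =>
    finsum_eq_finset_sum_of_support_subset _ (hfsupp a)
  -- LHS as finite double sum
  have lhsEq : detSum'' c q = ∑ z₁ ∈ K, ∑ z₂ ∈ K,
      (if (q : ℤ) ∣ (z₁.re * z₂.im - z₂.re * z₁.im) ∧
          Int.gcd (z₁.re * z₁.im) q = 1 ∧ Int.gcd (z₂.re * z₂.im) q = 1
        then c z₁ * conj (c z₂) else 0) := by
    rw [detSum'']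
    have hout : Function.support (fun z₁ : GaussianInt => ∑ᶠ z₂ : GaussianInt,
        if (q : ℤ) ∣ (z₁.re * z₂.im - z₂.re * z₁.im) ∧
            Int.gcd (z₁.re * z₁.im) q = 1 ∧ Int.gcd (z₂.re * z₂.im) q = 1
        then c z₁ * conj (c z₂) else 0) ⊆ ↑K := by
      intro z₁ hz
      simp only [Function.mem_support] at hz
      by_contra hmem
      apply hz
      have hc : c z₁ = 0 := by
        by_contra h
        exact hmem (Finset.mem_coe.mpr ((hmemK z₁).mpr h))
      simp [hc]
    rw [finsum_eq_finset_sum_of_support_subset _ hout]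
    refine Finset.sum_congr rfl fun z₁ _ => ?_
    have hin : Function.support (fun z₂ : GaussianInt =>
        if (q : ℤ) ∣ (z₁.re * z₂.im - z₂.re * z₁.im) ∧
            Int.gcd (z₁.re * z₁.im) q = 1 ∧ Int.gcd (z₂.re * z₂.im) q = 1
        then c z₁ * conj (c z₂) else 0) ⊆ ↑K := by
      intro z₂ hz
      simp only [Function.mem_support] at hz
      have hc : c z₂ ≠ 0 := by intro h0; apply hz; simp [h0]
      exact Finset.mem_coe.mpr ((hmemK z₂).mpr hc)
    exact finsum_eq_finset_sum_of_support_subset _ hin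
  -- inner character sum
  have sumEChar : ∀ z₁ z₂ : GaussianInt,
      (∑ a ∈ Finset.range q, f a z₁ * conj (f a z₂)) =
      if (q : ℤ) ∣ (z₁.re * z₂.im - z₂.re * z₁.im) ∧
          Int.gcd (z₁.re * z₁.im) q = 1 ∧ Int.gcd (z₂.re * z₂.im) q = 1
      then (q : ℂ) * (c z₁ * conj (c z₂)) else 0 := by
    intro z₁ z₂
    by_cases h1 : Int.gcd (z₁.re * z₁.im) q = 1
    · by_cases h2 : Int.gcd (z₂.re * z₂.im) q = 1
      · have hterm : ∀ a : ℕ, f a z₁ * conj (f a z₂)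
            = (c z₁ * conj (c z₂)) * eChar q ((a : ZMod q) * (x z₁ - x z₂)) := by
          intro a
          simp only [hf, if_pos h1, if_pos h2, map_mul]
          have hE : eChar q ((a : ZMod q) * x z₁) * eChar q (-((a : ZMod q) * x z₂))
              = eChar q ((a : ZMod q) * (x z₁ - x z₂)) := by
            rw [← eChar_add q hq0]
            congr 1
            ring
          rw [eChar_conj q hq0, ← hE]
          ring
        rw [Finset.sum_congr rfl (fun a _ => hterm a), ← Finset.mul_sum,
          sum_eChar q hq0]
        by_cases hd : x z₁ = x z₂
        · rw [if_pos (sub_eq_zero.mpr hd), if_pos ⟨(hx z₁ z₂ h1 h2).mpr hd, h1, h2⟩]; ring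
        · rw [if_neg (fun h => hd (sub_eq_zero.mp h)),
            if_neg (fun hP => hd ((hx z₁ z₂ h1 h2).mp hP.1)), mul_zero]
      · simp only [hf, if_neg h2, map_zero, mul_zero, Finset.sum_const_zero]
        rw [if_neg (fun hP => h2 hP.2.2)]
    · simp only [hf, if_neg h1, zero_mul, Finset.sum_const_zero]
      rw [if_neg (fun hP => h1 hP.2.1)]
  -- RHS as finite double sum
  have habs : ∀ a ∈ Finset.range q,
      ((norm (∑ᶠ z, f a z) ^ 2 : ℝ) : ℂ)
      = ∑ z₁ ∈ K, ∑ z₂ ∈ K, f a z₁ * conj (f a z₂) := by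
    intro a _
    rw [innerEq a, Complex.sq_norm, ← Complex.mul_conj, map_sum, Finset.sum_mul_sum]
  have step : ∑ a ∈ Finset.range q, ∑ z₁ ∈ K, ∑ z₂ ∈ K, f a z₁ * conj (f a z₂)
      = ∑ z₁ ∈ K, ∑ z₂ ∈ K, ∑ a ∈ Finset.range q, f a z₁ * conj (f a z₂) := by
    rw [Finset.sum_comm]
    exact Finset.sum_congr rfl fun z₁ _ => Finset.sum_comm
  rw [lhsEq, Complex.ofReal_mul, Complex.ofReal_inv, Complex.ofReal_natCast,
    Complex.ofReal_sum, Finset.sum_congr rfl habs, step, Finset.mul_sum]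
  refine Finset.sum_congr rfl fun z₁ _ => ?_
  rw [Finset.mul_sum]
  refine Finset.sum_congr rfl fun z₂ _ => ?_
  rw [sumEChar z₁ z₂, mul_ite, mul_zero, ← mul_assoc, inv_mul_cancel₀ hqc, one_mul]

/-- **Symmetry (2.1).**
`S''_q = q⁻¹ ∑_{a mod q} |∑_{(uv,q)=1} c(z) e(a u v̄ / q)|²
       = q⁻¹ ∑_{a mod q} |∑_{(uv,q)=1} c(z) e(a ū v / q)|²`. -/
theorem detSum''_symmetry (c : GaussianInt → ℂ) (hfin : (Function.support c).Finite)
    (q : ℕ) (hq : 1 ≤ q) :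
    detSum'' c q = (((q : ℝ)⁻¹ * ∑ a ∈ Finset.range q,
        norm (∑ᶠ z : GaussianInt,
          if Int.gcd (z.re * z.im) q = 1 then
            c z * eChar q ((a : ZMod q) * (z.re : ZMod q) * ((z.im : ZMod q))⁻¹)
          else 0) ^ 2 : ℝ) : ℂ) ∧
    detSum'' c q = (((q : ℝ)⁻¹ * ∑ a ∈ Finset.range q,
        norm (∑ᶠ z : GaussianInt,
          if Int.gcd (z.re * z.im) q = 1 then
            c z * eChar q ((a : ZMod q) * ((z.re : ZMod q))⁻¹ * (z.im : ZMod q))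
          else 0) ^ 2 : ℝ) : ℂ) := by
  have hdvd : ∀ z₁ z₂ : GaussianInt,
      ((q : ℤ) ∣ (z₁.re * z₂.im - z₂.re * z₁.im)) ↔
      ((z₁.re : ZMod q) * (z₂.im : ZMod q) = (z₂.re : ZMod q) * (z₁.im : ZMod q)) := by
    intro z₁ z₂
    rw [← ZMod.intCast_zmod_eq_zero_iff_dvd, Int.cast_sub, Int.cast_mul, Int.cast_mul,
      sub_eq_zero]
  constructor
  · have hx : ∀ z₁ z₂ : GaussianInt, Int.gcd (z₁.re * z₁.im) q = 1 →
        Int.gcd (z₂.re * z₂.im) q = 1 →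
        ((q : ℤ) ∣ (z₁.re * z₂.im - z₂.re * z₁.im) ↔
          (z₁.re : ZMod q) * ((z₁.im : ZMod q))⁻¹
            = (z₂.re : ZMod q) * ((z₂.im : ZMod q))⁻¹) := by
      intro z₁ z₂ h1 h2
      obtain ⟨hu₁, hv₁⟩ := isUnit_pair h1
      obtain ⟨hu₂, hv₂⟩ := isUnit_pair h2
      rw [hdvd z₁ z₂]
      exact unit_cross _ _ _ _ (ZMod.mul_inv_of_unit _ hv₁) (ZMod.mul_inv_of_unit _ hv₂)
    have := main_identity c hfin q hq
      (fun z => (z.re : ZMod q) * ((z.im : ZMod q))⁻¹) hx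
    simpa only [← mul_assoc] using this
  · have hx : ∀ z₁ z₂ : GaussianInt, Int.gcd (z₁.re * z₁.im) q = 1 →
        Int.gcd (z₂.re * z₂.im) q = 1 →
        ((q : ℤ) ∣ (z₁.re * z₂.im - z₂.re * z₁.im) ↔
          ((z₁.re : ZMod q))⁻¹ * (z₁.im : ZMod q)
            = ((z₂.re : ZMod q))⁻¹ * (z₂.im : ZMod q)) := by
      intro z₁ z₂ h1 h2
      obtain ⟨hu₁, hv₁⟩ := isUnit_pair h1
      obtain ⟨hu₂, hv₂⟩ := isUnit_pair h2
      have e₁ : (z₁.re : ZMod q) * ((z₁.re : ZMod q))⁻¹ = 1 := ZMod.mul_inv_of_unit _ hu₁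
      have e₂ : (z₂.re : ZMod q) * ((z₂.re : ZMod q))⁻¹ = 1 := ZMod.mul_inv_of_unit _ hu₂
      rw [hdvd z₁ z₂]
      constructor
      · intro h
        linear_combination (-(((z₁.re : ZMod q))⁻¹ * ((z₂.re : ZMod q))⁻¹)) * h
          + (((z₂.re : ZMod q))⁻¹ * (z₂.im : ZMod q)) * e₁
          - (((z₁.re : ZMod q))⁻¹ * (z₁.im : ZMod q)) * e₂
      · intro h
        linear_combination (-((z₁.re : ZMod q) * (z₂.re : ZMod q))) * h
          + ((z₂.re : ZMod q) * (z₁.im : ZMod q)) * e₁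
          - ((z₁.re : ZMod q) * (z₂.im : ZMod q)) * e₂
    have := main_identity c hfin q hq
      (fun z => ((z.re : ZMod q))⁻¹ * (z.im : ZMod q)) hx
    simpa only [← mul_assoc] using this
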